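/- Let p, N be real numbers with 1 < p < N and let γ be a real number with 0 < γ < ((N-p)/p)^p. Define f : [0,∞) → ℝ by f(μ) = (p-1) μ^p - (N-p) μ^{p-1} + γ. Then f has exactly two zeros γ₁ < γ₂ in [0,∞), and they satisfy 0 ≤ γ₁ < (N-p)/p < γ₂ ≤ (N-p)/(p-1). -/

import Mathlib

open Real

/-- for `1 < p < N` and `0 < γ < ((N-p)/p)^p`, the function
`f(μ) = (p-1)μ^p - (N-p)μ^{p-1} + γ` has exactly two zeros `γ₁ < γ₂` in `[0,∞)`,
with `0 ≤ γ₁ < (N-p)/p < γ₂ ≤ (N-p)/(p-1)`. -/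
theorem two_roots_of_hardy_polynomial
    (p N γ : ℝ) (hp1 : 1 < p) (hpN : p < N)
    (hγ0 : 0 < γ) (hγ : γ < ((N - p) / p) ^ p) :
    ∃ γ₁ γ₂ : ℝ,
      0 ≤ γ₁ ∧ γ₁ < (N - p) / p ∧ (N - p) / p < γ₂ ∧ γ₂ ≤ (N - p) / (p - 1) ∧
      (p - 1) * γ₁ ^ p - (N - p) * γ₁ ^ (p - 1) + γ = 0 ∧
      (p - 1) * γ₂ ^ p - (N - p) * γ₂ ^ (p - 1) + γ = 0 ∧
      ∀ μ : ℝ, 0 ≤ μ →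
        (p - 1) * μ ^ p - (N - p) * μ ^ (p - 1) + γ = 0 → μ = γ₁ ∨ μ = γ₂ := by
  have hN : 0 < N - p := by linarith
  have hp0 : 0 < p := by linarith
  have hp1' : 0 < p - 1 := by linarith
  set a : ℝ := (N - p) / p with ha_def
  set b : ℝ := (N - p) / (p - 1) with hb_def
  have ha : 0 < a := div_pos hN hp0
  have hb : 0 < b := div_pos hN hp1'
  have hab : a < b := by
    rw [ha_def, hb_def, div_lt_div_iff₀ hp0 hp1']
    nlinarith
  set f : ℝ → ℝ := fun μ => (p - 1) * μ ^ p - (N - p) * μ ^ (p - 1) + γ with hf_def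
  have hc1 : Continuous fun x : ℝ => x ^ p := by
    rw [continuous_iff_continuousAt]; intro x
    exact Real.continuousAt_rpow_const x p (Or.inr hp0.le)
  have hc2 : Continuous fun x : ℝ => x ^ (p - 1) := by
    rw [continuous_iff_continuousAt]; intro x
    exact Real.continuousAt_rpow_const x (p - 1) (Or.inr hp1'.le)
  have hcont : Continuous f :=
    ((continuous_const.mul hc1).sub (continuous_const.mul hc2)).add continuous_const
  have hf0 : f 0 = γ := by
    simp [hf_def, Real.zero_rpow (ne_of_gt hp0), Real.zero_rpow (ne_of_gt hp1')]
  have hpa : p * a = N - p := by rw [ha_def]; field_simp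
  have hpb : (p - 1) * b = N - p := by rw [hb_def]; field_simp
  have hap : a ^ p = a ^ (p - 1) * a := by
    nth_rewrite 1 [show p = (p - 1) + 1 by ring]
    rw [Real.rpow_add ha, Real.rpow_one]
  have hbp : b ^ p = b ^ (p - 1) * b := by
    nth_rewrite 1 [show p = (p - 1) + 1 by ring]
    rw [Real.rpow_add hb, Real.rpow_one]
  have hfa : f a < 0 := by
    have h1 : f a = γ - a ^ (p - 1) * a := by
      simp only [hf_def]
      rw [hap, ← hpa]; ring
    rw [hap] at hγ
    linarith
  have hfb : f b = γ := by
    simp only [hf_def]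
    rw [hbp, ← hpb]; ring
  -- derivative
  have hd : ∀ x : ℝ, 0 < x →
      HasDerivAt f ((p - 1) * x ^ (p - 2) * (p * x - (N - p))) x := by
    intro x hx
    have h1 : HasDerivAt (fun y : ℝ => y ^ p) (p * x ^ (p - 1)) x :=
      Real.hasDerivAt_rpow_const (Or.inl hx.ne')
    have h2 : HasDerivAt (fun y : ℝ => y ^ (p - 1)) ((p - 1) * x ^ (p - 1 - 1)) x :=
      Real.hasDerivAt_rpow_const (Or.inl hx.ne')
    have h3 := ((h1.const_mul (p - 1)).sub (h2.const_mul (N - p))).add_const γ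
    convert h3 using 1
    case e'_4 => rfl
    case e'_5 => rfl
    case e'_8 => rfl
    have hx1 : x ^ (p - 1) = x ^ (p - 2) * x := by
      rw [show p - 1 = (p - 2) + 1 by ring, Real.rpow_add hx, Real.rpow_one]
    rw [hx1, show p - 1 - 1 = p - 2 by ring]; ring
  have hanti : StrictAntiOn f (Set.Icc 0 a) := by
    apply strictAntiOn_of_deriv_neg (convex_Icc 0 a) hcont.continuousOn
    intro x hx
    rw [interior_Icc] at hx
    rw [(hd x hx.1).deriv]
    have hx2 := Real.rpow_pos_of_pos hx.1 (p - 2)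
    have hlt : p * x < N - p := by rw [← hpa]; exact (mul_lt_mul_iff_right₀ hp0).2 hx.2
    exact mul_neg_of_pos_of_neg (mul_pos hp1' hx2) (by linarith)
  have hmono : StrictMonoOn f (Set.Ici a) := by
    apply strictMonoOn_of_deriv_pos (convex_Ici a) hcont.continuousOn
    intro x hx
    rw [interior_Ici] at hx
    have hx0 : 0 < x := ha.trans hx
    rw [(hd x hx0).deriv]
    have hx2 := Real.rpow_pos_of_pos hx0 (p - 2)
    have hlt : N - p < p * x := by rw [← hpa]; exact (mul_lt_mul_iff_right₀ hp0).2 hx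
    exact mul_pos (mul_pos hp1' hx2) (by linarith)
  -- roots via IVT
  have h01 : (0 : ℝ) ∈ Set.Ioo (f a) (f 0) := ⟨hfa, by rw [hf0]; exact hγ0⟩
  obtain ⟨γ₁, hγ₁mem, hγ₁⟩ := intermediate_value_Ioo' ha.le hcont.continuousOn h01
  have h02 : (0 : ℝ) ∈ Set.Ioo (f a) (f b) := ⟨hfa, by rw [hfb]; exact hγ0⟩
  obtain ⟨γ₂, hγ₂mem, hγ₂⟩ := intermediate_value_Ioo hab.le hcont.continuousOn h02
  refine ⟨γ₁, γ₂, hγ₁mem.1.le, hγ₁mem.2, hγ₂mem.1, hγ₂mem.2.le, hγ₁, hγ₂, ?_⟩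
  intro μ hμ0 hμf
  have hμf' : f μ = 0 := hμf
  rcases le_or_gt μ a with h | h
  · left
    exact hanti.injOn ⟨hμ0, h⟩ ⟨hγ₁mem.1.le, hγ₁mem.2.le⟩ (by rw [hμf', hγ₁])
  · right
    exact hmono.injOn h.le hγ₂mem.1.le (by rw [hμf', hγ₂])
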